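/- If a graph G with m edges has spectral radius λ₁ > √m, then G contains a triangle (Nosal's Theorem). -/

import Mathlib

/-- **Nosal's Theorem.** If a graph `G` with `m` edges has spectral radius `λ₁ > √m`,
then `G` contains a triangle. -/
theorem nosal {V : Type*} [Fintype V] [DecidableEq V] (G : SimpleGraph V)
    [DecidableRel G.Adj] (lam : ℝ)
    (heig : ∃ x : V → ℝ, x ≠ 0 ∧ (G.adjMatrix ℝ).mulVec x = lam • x)
    (hmax : ∀ μ : ℝ, (∃ x : V → ℝ, x ≠ 0 ∧ (G.adjMatrix ℝ).mulVec x = μ • x) → μ ≤ lam)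
    (h : Real.sqrt (G.edgeFinset.card) < lam) :
    ¬ G.CliqueFree 3 := by
  intro hcf
  obtain ⟨x, hx0, hAx⟩ := heig
  have hlam : 0 ≤ lam := le_of_lt (lt_of_le_of_lt (Real.sqrt_nonneg _) h)
  set y : V → ℝ := fun v => |x v| with hy
  obtain ⟨v0, hv0⟩ : ∃ v, x v ≠ 0 := by
    by_contra hc; push_neg at hc; exact hx0 (funext hc)
  have : Nonempty V := ⟨v0⟩
  obtain ⟨u, -, hu⟩ := Finset.exists_max_image Finset.univ y ⟨v0, Finset.mem_univ v0⟩
  have hM : 0 < y u := lt_of_lt_of_le (abs_pos.mpr hv0) (hu v0 (Finset.mem_univ _))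
  have step1 : ∀ v, lam * y v ≤ ∑ w ∈ G.neighborFinset v, y w := by
    intro v
    have h1 : lam * x v = ∑ w ∈ G.neighborFinset v, x w := by
      have h2 := congrFun hAx v
      rw [SimpleGraph.adjMatrix_mulVec_apply] at h2
      simpa [Pi.smul_apply] using h2.symm
    calc lam * y v = |lam * x v| := by rw [abs_mul, abs_of_nonneg hlam]
    _ = |∑ w ∈ G.neighborFinset v, x w| := by rw [h1]
    _ ≤ ∑ w ∈ G.neighborFinset v, y w := Finset.abs_sum_le_sum_abs _ _
  have comb : ∑ w ∈ G.neighborFinset u, (G.neighborFinset w).card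
      ≤ G.edgeFinset.card := by
    rw [← Finset.card_sigma]
    apply Finset.card_le_card_of_injOn (fun p => s(p.1, p.2))
    · rintro ⟨w, z⟩ hp
      simp only [Finset.mem_coe, Finset.mem_sigma, SimpleGraph.mem_neighborFinset] at hp
      simpa [SimpleGraph.mem_edgeFinset] using hp.2
    · rintro ⟨w, z⟩ hp ⟨w', z'⟩ hp' he
      simp only [Finset.mem_coe, Finset.mem_sigma, SimpleGraph.mem_neighborFinset] at hp hp'
      have he' : s(w, z) = s(w', z') := he
      rw [Sym2.eq_iff] at he'
      rename' he' => he
      obtain ⟨rfl, rfl⟩ | ⟨rfl, rfl⟩ := he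
      · rfl
      · exact absurd (SimpleGraph.is3Clique_triple_iff.mpr
          ⟨hp.1, hp'.1, hp.2⟩) (hcf {u, w, z})
  have key : lam * lam * y u ≤ (G.edgeFinset.card : ℝ) * y u := by
    calc lam * lam * y u = lam * (lam * y u) := by ring
    _ ≤ lam * ∑ w ∈ G.neighborFinset u, y w :=
        mul_le_mul_of_nonneg_left (step1 u) hlam
    _ = ∑ w ∈ G.neighborFinset u, lam * y w := Finset.mul_sum _ _ _
    _ ≤ ∑ w ∈ G.neighborFinset u, ∑ z ∈ G.neighborFinset w, y z :=
        Finset.sum_le_sum (fun w _ => step1 w)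
    _ ≤ ∑ w ∈ G.neighborFinset u, ∑ z ∈ G.neighborFinset w, y u :=
        Finset.sum_le_sum (fun w _ => Finset.sum_le_sum
          (fun z _ => hu z (Finset.mem_univ _)))
    _ = (∑ w ∈ G.neighborFinset u, ((G.neighborFinset w).card : ℝ)) * y u := by
        rw [Finset.sum_mul]
        exact Finset.sum_congr rfl fun w _ => by
          rw [Finset.sum_const, nsmul_eq_mul]
    _ ≤ (G.edgeFinset.card : ℝ) * y u := by
        apply mul_le_mul_of_nonneg_right _ hM.le
        exact_mod_cast comb
  have hlam2 : lam * lam ≤ (G.edgeFinset.card : ℝ) := le_of_mul_le_mul_right key hM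
  have : lam ≤ Real.sqrt (G.edgeFinset.card) := by
    rw [Real.le_sqrt hlam (by positivity)]
    nlinarith
  linarith
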